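/- Let R be a Noetherian integrally closed (normal) domain, and let 0 → M → N → Q → 0 be a short exact sequence of R-modules where N is a finitely generated reflexive R-module and every prime ideal in the support of Q has height at least 2. Then the inclusion M → N is an isomorphism if and only if M is reflexive. -/
import Mathlib
variable {R : Type} [CommRing R] [IsDomain R]

/-- The "denominator ideal" of an element of the fraction field. -/
noncomputable def denomIdeal (R : Type) [CommRing R] [IsDomain R] (y : FractionRing R) :
    Ideal R where
  carrier := {r : R | ∃ a : R, algebraMap R (FractionRing R) a = r • y}
  add_mem' := by
    rintro r s ⟨a, ha⟩ ⟨b, hb⟩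
    exact ⟨a + b, by rw [map_add, ha, hb, add_smul]⟩
  zero_mem' := ⟨0, by simp⟩
  smul_mem' := by
    rintro c r ⟨a, ha⟩
    exact ⟨c * a, by rw [smul_eq_mul, mul_smul, ← ha, map_mul, Algebra.smul_def]⟩

lemma mem_denomIdeal {y : FractionRing R} {r : R} :
    r ∈ denomIdeal R y ↔ ∃ a : R, algebraMap R (FractionRing R) a = r • y := Iff.rfl

/-- If `u ∉ P`, `t ∈ P` and `u • P ⊆ t R`, then `P` has height at most one. -/
lemma height_le_one_aux [IsNoetherianRing R] (P : Ideal R) (hP : P.IsPrime)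
    (t u : R) (ht : t ∈ P) (hu : u ∉ P) (H : ∀ s ∈ P, ∃ c, u * s = t * c) :
    Order.height (⟨P, hP⟩ : PrimeSpectrum R) ≤ 1 := by
  rw [Order.height_le_iff]
  intro c hlast
  suffices h : c.length ≤ 1 by exact_mod_cast h
  by_contra hlen
  push_neg at hlen
  have h2 : 2 ≤ c.length := hlen
  set q0 : PrimeSpectrum R := c ⟨c.length - 2, by omega⟩ with hq0
  set q1 : PrimeSpectrum R := c ⟨c.length - 1, by omega⟩ with hq1
  have hq01 : q0 < q1 := c.strictMono (by simp [Fin.mk_lt_mk]; omega)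
  have hq1last : q1 < c.last := by
    apply c.strictMono
    show (⟨c.length - 1, by omega⟩ : Fin (c.length + 1)) < Fin.last _
    simp [Fin.lt_def, Fin.last]; omega
  have hq1P : q1.asIdeal < P := lt_of_lt_of_le hq1last hlast
  -- `t ∉ q1`
  have htq1 : t ∉ q1.asIdeal := by
    intro htq
    have hPle : P ≤ q1.asIdeal := by
      intro s hs
      obtain ⟨d, hd⟩ := H s hs
      have : u * s ∈ q1.asIdeal := hd ▸ Ideal.mul_mem_right _ _ htq
      rcases q1.2.mem_or_mem this with h | h
      · exact absurd (hq1P.le h) hu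
      · exact h
    exact hq1P.not_ge hPle
  -- every element of `q1` is zero
  have hq1bot : q1.asIdeal = ⊥ := by
    rw [eq_bot_iff]
    intro a ha
    have chain : ∀ n : ℕ, ∃ b ∈ q1.asIdeal, u ^ n * a = t ^ n * b := by
      intro n
      induction n with
      | zero => exact ⟨a, ha, by simp⟩
      | succ n ih =>
        obtain ⟨b, hb, hab⟩ := ih
        obtain ⟨d, hd⟩ := H b (hq1P.le hb)
        have hdq1 : d ∈ q1.asIdeal := by
          rcases q1.2.mem_or_mem (show t * d ∈ q1.asIdeal from hd ▸ Ideal.mul_mem_left _ _ hb)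
            with h | h
          · exact absurd h htq1
          · exact h
        refine ⟨d, hdq1, ?_⟩
        calc u ^ (n+1) * a = u * (u ^ n * a) := by ring
        _ = u * (t ^ n * b) := by rw [hab]
        _ = t ^ n * (u * b) := by ring
        _ = t ^ n * (t * d) := by rw [hd]
        _ = t ^ (n+1) * d := by ring
    -- pass to the localization at `P`
    let S := Localization.AtPrime P
    let f := algebraMap R S
    haveI : IsNoetherianRing S := IsLocalization.isNoetherianRing P.primeCompl S ‹_›
    have hunit : IsUnit (f u) := IsLocalization.map_units S (⟨u, hu⟩ : P.primeCompl)
    have key : ∀ n : ℕ, f a ∈ Ideal.span {f t} ^ n := by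
      intro n
      obtain ⟨b, _, hab⟩ := chain n
      rw [Ideal.span_singleton_pow, Ideal.mem_span_singleton]
      obtain ⟨v, hv⟩ := hunit.exists_left_inv
      refine ⟨v ^ n * f b, ?_⟩
      have h1 : f u ^ n * f a = f t ^ n * f b := by
        rw [← map_pow, ← map_pow, ← map_mul, ← map_mul, hab]
      calc f a = 1 ^ n * f a := by ring
      _ = (v * f u) ^ n * f a := by rw [hv]
      _ = v ^ n * (f u ^ n * f a) := by ring
      _ = v ^ n * (f t ^ n * f b) := by rw [h1]
      _ = f t ^ n * (v ^ n * f b) := by ring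
    have hne : Ideal.span {f t} ≠ ⊤ := by
      intro h
      rw [Ideal.span_singleton_eq_top] at h
      exact (IsLocalization.AtPrime.isUnit_to_map_iff S P t).mp h ht
    have : f a ∈ (⊥ : Ideal S) := by
      rw [← Ideal.iInf_pow_eq_bot_of_isDomain _ hne]
      exact Submodule.mem_iInf _ |>.mpr key
    have hfa : f a = 0 := this
    obtain ⟨m, hm⟩ := (IsLocalization.map_eq_zero_iff P.primeCompl S a).mp hfa
    have hm0 : (m : R) ≠ 0 := fun h => m.2 (h ▸ P.zero_mem)
    rcases mul_eq_zero.mp hm with h | h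
    · exact absurd h hm0
    · exact h
  have h0 : q0.asIdeal < q1.asIdeal := (PrimeSpectrum.asIdeal_lt_asIdeal _ _).mpr hq01
  rw [hq1bot] at h0
  exact not_lt_bot h0

/-- In a Noetherian integrally closed domain, the denominator ideal of an element of the
fraction field that is not in `R` is contained in a prime of height at most one. -/
theorem exists_prime_denom_le_height_le_one [IsNoetherianRing R] [IsIntegrallyClosed R]
    (x : FractionRing R) (hx : ∀ a : R, algebraMap R (FractionRing R) a ≠ x) :
    ∃ (P : Ideal R) (hP : P.IsPrime), denomIdeal R x ≤ P ∧
      Order.height (⟨P, hP⟩ : PrimeSpectrum R) ≤ 1 := by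
  classical
  -- choose a maximal denominator ideal
  set 𝒮 : Set (Ideal R) :=
    {J | ∃ y : FractionRing R, (∀ a : R, algebraMap R (FractionRing R) a ≠ y) ∧ denomIdeal R x ≤ denomIdeal R y ∧
      J = denomIdeal R y} with h𝒮
  have hne : 𝒮.Nonempty := ⟨denomIdeal R x, x, hx, le_rfl, rfl⟩
  obtain ⟨P, hPmem, hmax⟩ :=
    (set_has_maximal_iff_noetherian.mpr (inferInstance : IsNoetherian R R)) 𝒮 hne
  obtain ⟨y, hy, hxy, rfl⟩ := hPmem
  set P := denomIdeal R y with hPdef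
  -- `P` is prime
  have hP : P.IsPrime := by
    constructor
    · intro h
      obtain ⟨a, ha⟩ : (1 : R) ∈ P := h ▸ Submodule.mem_top
      exact hy a (by rwa [one_smul] at ha)
    · intro a b hab
      by_cases haP : a ∈ P
      · exact Or.inl haP
      right
      have hy' : ∀ c : R, algebraMap R (FractionRing R) c ≠ a • y := by
        intro c hc
        exact haP ⟨c, hc⟩
      have hle : P ≤ denomIdeal R (a • y) := by
        rintro r ⟨d, hd⟩
        exact ⟨a * d, by rw [map_mul, smul_comm r a y, ← hd, Algebra.smul_def]⟩
      have hmem : denomIdeal R (a • y) ∈ 𝒮 := ⟨a • y, hy', le_trans hxy hle, rfl⟩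
      have heq : denomIdeal R (a • y) = P :=
        ((lt_or_eq_of_le hle).resolve_left (hmax _ hmem)).symm
      rw [← heq]
      obtain ⟨e, he⟩ := hab
      refine ⟨e, ?_⟩
      show algebraMap R (FractionRing R) e = b • a • y
      rw [← mul_smul, mul_comm b a]
      exact he
  -- a nonzero element of `denomIdeal R x`
  obtain ⟨c0, b0, hb0, hcb⟩ := IsFractionRing.div_surjective (A := R) x
  have hb0' : (b0 : R) ≠ 0 := nonZeroDivisors.ne_zero hb0
  have hb0K : algebraMap R (FractionRing R) b0 ≠ 0 := fun h => hb0' (IsFractionRing.to_map_eq_zero_iff.mp h)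
  have hb0x : b0 ∈ denomIdeal R x := by
    refine ⟨c0, ?_⟩
    rw [Algebra.smul_def, ← hcb]
    field_simp
  -- dichotomy
  by_cases hA : ∀ t ∈ P, ∃ s ∈ P, algebraMap R (FractionRing R) s = t • y
  · -- `y` would be integral over `R`, contradiction
    exfalso
    set W : Submodule R (FractionRing R) := Submodule.map (Algebra.linearMap R (FractionRing R)) (P : Submodule R R) with hW
    have hWbot : W ≠ ⊥ := by
      intro h
      have : algebraMap R (FractionRing R) b0 ∈ W := ⟨b0, hxy hb0x, rfl⟩
      rw [h] at this
      simp only [Submodule.mem_bot] at this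
      exact hb0' (IsFractionRing.to_map_eq_zero_iff.mp this)
    have hWfg : W.FG := (IsNoetherian.noetherian (P : Submodule R R)).map _
    have hstab : ∀ w ∈ W, y • w ∈ W := by
      rintro w ⟨t, htP, rfl⟩
      obtain ⟨s, hsP, hs⟩ := hA t htP
      refine ⟨s, hsP, ?_⟩
      show algebraMap R (FractionRing R) s = y • algebraMap R (FractionRing R) t
      rw [hs, Algebra.smul_def, smul_eq_mul, mul_comm]
    have hint : IsIntegral R y := isIntegral_of_smul_mem_submodule W hWbot hWfg y hstab
    obtain ⟨a, ha⟩ := IsIntegrallyClosed.isIntegral_iff.mp hint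
    exact hy a ha
  · push_neg at hA
    obtain ⟨t, htP, hB⟩ := hA
    obtain ⟨u, hu⟩ := id htP
    have huP : u ∉ P := fun h => hB u h hu
    have H : ∀ s ∈ P, ∃ d, u * s = t * d := by
      rintro s ⟨d, hd⟩
      refine ⟨d, IsFractionRing.injective R (FractionRing R) ?_⟩
      rw [map_mul, map_mul, hu, hd, Algebra.smul_def, Algebra.smul_def]
      ring
    exact ⟨P, hP, hxy, height_le_one_aux P hP t u htP huP H⟩



/-- Let `R` be a Noetherian integrally closed (normal) domain and let
`0 → M → N → Q → 0` be a short exact sequence of `R`-modules, where `N` is a finitely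
generated reflexive `R`-module and every prime ideal in the support of `Q` has height at
least `2`. Then the inclusion `M → N` is an isomorphism if and only if `M` is reflexive. -/
theorem bijective_iff_isReflexive_of_support_height_ge_two
    (R : Type) [CommRing R] [IsDomain R] [IsNoetherianRing R] [IsIntegrallyClosed R]
    (M N Q : Type) [AddCommGroup M] [Module R M] [AddCommGroup N] [Module R N]
    [AddCommGroup Q] [Module R Q]
    (i : M →ₗ[R] N) (p : N →ₗ[R] Q)
    (hi : Function.Injective i) (hp : Function.Surjective p)
    (hexact : LinearMap.range i = LinearMap.ker p)
    [Module.Finite R N] [Module.IsReflexive R N]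
    (hQ : ∀ 𝔭 ∈ Module.support R Q, 2 ≤ Order.height 𝔭) :
    Function.Bijective i ↔ Module.IsReflexive R M := by
  classical
  constructor
  · intro hb
    exact Module.equiv (LinearEquiv.ofBijective i hb).symm
  intro hM
  refine ⟨hi, ?_⟩
  -- Step 0 : `Q` is torsion.
  have hker : ∀ (r : R) (n : N), r • n ∈ LinearMap.range i ↔ r • p n = 0 := by
    intro r n
    rw [hexact, LinearMap.mem_ker, ← map_smul]
  have htor : ∀ n : N, ∃ r : R, r ≠ 0 ∧ ∃ m, i m = r • n := by
    intro n
    by_contra h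
    push_neg at h
    have hbot : (⟨⊥, Ideal.bot_prime⟩ : PrimeSpectrum R) ∈ Module.support R Q := by
      rw [Module.mem_support_iff_exists_annihilator]
      refine ⟨p n, ?_⟩
      intro r hr
      rw [Submodule.mem_annihilator_span_singleton] at hr
      show r ∈ (⊥ : Ideal R)
      rw [Ideal.mem_bot]
      by_contra hr0
      obtain ⟨m, hm⟩ := ((hker r n).mpr hr)
      exact h r hr0 m hm
    have h0 : Order.height (⟨⊥, Ideal.bot_prime⟩ : PrimeSpectrum R) = 0 := by
      rw [Order.height_eq_zero]
      intro b _
      show (⟨⊥, Ideal.bot_prime⟩ : PrimeSpectrum R).asIdeal ≤ b.asIdeal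
      exact bot_le
    have := hQ _ hbot
    rw [h0] at this
    norm_num at this
  -- Step 1 : the annihilator of `[n] : Q` is contained in the denominator ideal.
  -- key construction : for every `n : N` there is `v : R` with `r * v = g m` whenever `i m = r • n`
  have key : ∀ (g : Module.Dual R M) (n : N), ∃ v : R,
      ∀ (r : R) (m : M), i m = r • n → r * v = g m := by
    intro g n
    obtain ⟨r₀, hr₀, m₀, hm₀⟩ := htor n
    set x : FractionRing R :=
      algebraMap R (FractionRing R) (g m₀) / algebraMap R (FractionRing R) r₀ with hxdef
    have hr₀K : algebraMap R (FractionRing R) r₀ ≠ 0 :=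
      fun h => hr₀ (IsFractionRing.to_map_eq_zero_iff.mp h)
    have hx : ∀ (r : R) (m : M), i m = r • n →
        algebraMap R (FractionRing R) r * x = algebraMap R (FractionRing R) (g m) := by
      intro r m hm
      have h1 : i (r • m₀) = i (r₀ • m) := by
        rw [map_smul, map_smul, hm₀, hm, smul_comm r₀ r n]
      have h2 : r • m₀ = r₀ • m := hi h1
      have h3 : r * g m₀ = r₀ * g m := by
        rw [← smul_eq_mul, ← smul_eq_mul, ← map_smul, ← map_smul, h2]
      rw [hxdef, mul_div_assoc']
      rw [div_eq_iff hr₀K, ← map_mul, ← map_mul, h3, mul_comm]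
    -- `x` lies in `R`
    have hxR : ∃ a : R, algebraMap R (FractionRing R) a = x := by
      by_contra hc
      push_neg at hc
      obtain ⟨P, hP, hle, hht⟩ := exists_prime_denom_le_height_le_one x hc
      have hPsupp : (⟨P, hP⟩ : PrimeSpectrum R) ∈ Module.support R Q := by
        rw [Module.mem_support_iff_exists_annihilator]
        refine ⟨p n, ?_⟩
        intro r hr
        rw [Submodule.mem_annihilator_span_singleton] at hr
        obtain ⟨m, hm⟩ := (hker r n).mpr hr
        exact hle ⟨g m, by rw [Algebra.smul_def]; exact (hx r m hm).symm⟩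
      have := hQ _ hPsupp
      have : (2 : ℕ∞) ≤ 1 := le_trans this hht
      norm_num at this
    obtain ⟨v, hv⟩ := hxR
    refine ⟨v, fun r m hm => ?_⟩
    have := hx r m hm
    rw [← hv, ← map_mul] at this
    exact IsFractionRing.injective R (FractionRing R) this
  -- Step 2 : `i.dualMap` is bijective.
  have hdual : Function.Bijective (LinearMap.dualMap i) := by
    constructor
    · intro f₁ f₂ hf
      ext n
      obtain ⟨r, hr, m, hm⟩ := htor n
      have h1 : f₁ (i m) = f₂ (i m) := by
        have := congrArg (fun φ => φ m) hf
        simpa using this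
      rw [hm, map_smul, map_smul, smul_eq_mul, smul_eq_mul] at h1
      exact mul_left_cancel₀ hr h1
    · intro g
      choose F hF using key g
      have hadd : ∀ n n' : N, F (n + n') = F n + F n' := by
        intro n n'
        obtain ⟨r, hr, m, hm⟩ := htor n
        obtain ⟨r', hr', m', hm'⟩ := htor n'
        have hsum : i (r' • m + r • m') = (r * r') • (n + n') := by
          rw [map_add, map_smul, map_smul, hm, hm', smul_add]
          rw [smul_smul, smul_smul, mul_comm r' r]
        have h1 := hF (n + n') (r * r') (r' • m + r • m') hsum
        have h2 := hF n r m hm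
        have h3 := hF n' r' m' hm'
        rw [map_add, map_smul, map_smul, smul_eq_mul, smul_eq_mul, ← h2, ← h3] at h1
        have : (r * r') * F (n + n') = (r * r') * (F n + F n') := by rw [h1]; ring
        exact mul_left_cancel₀ (mul_ne_zero hr hr') this
      have hsmul : ∀ (c : R) (n : N), F (c • n) = c * F n := by
        intro c n
        obtain ⟨r, hr, m, hm⟩ := htor n
        have hcn : i (c • m) = r • (c • n) := by
          rw [map_smul, hm, smul_comm]
        have h1 := hF (c • n) r (c • m) hcn
        have h2 := hF n r m hm
        rw [map_smul, smul_eq_mul, ← h2] at h1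
        have : r * F (c • n) = r * (c * F n) := by rw [h1]; ring
        exact mul_left_cancel₀ hr this
      refine ⟨⟨⟨F, fun a b => hadd a b⟩, fun c n => ?_⟩, ?_⟩
      · simpa using hsmul c n
      · ext m
        have := hF (i m) 1 m (one_smul R (i m)).symm
        simpa using this
  -- Step 3 : conclude surjectivity via the double dual.
  intro n
  have hddual : Function.Bijective (LinearMap.dualMap (LinearMap.dualMap i)) :=
    (LinearEquiv.ofBijective (LinearMap.dualMap i) hdual).dualMap.bijective
  obtain ⟨m, hm⟩ := (hddual.comp (Module.bijective_dual_eval R M)).surjective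
    (Module.Dual.eval R N n)
  refine ⟨m, (Module.bijective_dual_eval R N).injective ?_⟩
  exact hm
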